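/- An ideal I on ω is Egorov if and only if for every sequence (X_n)_{n∈ω} of Lebesgue-measurable subsets of [0,1] such that the sequence of characteristic functions (χ_{X_n}) is I-pointwise convergent to 0, there is a Lebesgue-measurable set M ⊆ [0,1] with λ(M) ≤ 1/2 such that {n ∈ ω : X_n ⊄ M} ∈ I. -/

import Mathlib

open MeasureTheory Set

/-- An ideal on a (countable) set `X`. -/
def IsIdeal {X : Type} (I : Set (Set X)) : Prop :=
  (∀ A B : Set X, A ∈ I → B ∈ I → A ∪ B ∈ I) ∧
  (∀ A B : Set X, A ⊆ B → B ∈ I → A ∈ I) ∧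
  (∀ A : Set X, A.Finite → A ∈ I) ∧
  (Set.univ : Set X) ∉ I

/-- `I`-pointwise convergence on `[0,1]` of a family of functions. -/
def IConvPtwise {X : Type} (I : Set (Set X)) (f : X → ℝ → ℝ) (g : ℝ → ℝ) : Prop :=
  ∀ t ∈ Icc (0:ℝ) 1, ∀ ε : ℝ, 0 < ε → {a : X | ε ≤ |f a t - g t|} ∈ I

/-- `I`-uniform convergence on `M` of a family of functions. -/
def IConvUnif {X : Type} (I : Set (Set X)) (f : X → ℝ → ℝ) (g : ℝ → ℝ) (M : Set ℝ) : Prop :=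
  ∀ ε : ℝ, 0 < ε → {a : X | ∃ t ∈ M, ε ≤ |f a t - g t|} ∈ I

/-- `I` is an Egorov ideal. -/
def IsEgorov {X : Type} (I : Set (Set X)) : Prop :=
  ∀ (f : X → ℝ → ℝ) (g : ℝ → ℝ),
    (∀ a : X, AEMeasurable (f a) (volume.restrict (Icc (0:ℝ) 1))) →
    AEMeasurable g (volume.restrict (Icc (0:ℝ) 1)) →
    IConvPtwise I f g →
    ∀ η : ℝ, 0 < η →
      ∃ M : Set ℝ, M ⊆ Icc (0:ℝ) 1 ∧ NullMeasurableSet M volume ∧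
        volume (Icc (0:ℝ) 1 \ M) < ENNReal.ofReal η ∧
        IConvUnif I f g M

def IsSubmeasure (φ : Set ℕ → ENNReal) : Prop :=
  φ ∅ = 0 ∧ (∀ n : ℕ, φ {n} < ⊤) ∧
  ∀ A B : Set ℕ, φ A ≤ φ (A ∪ B) ∧ φ (A ∪ B) ≤ φ A + φ B

def IsLscSubmeasure (φ : Set ℕ → ENNReal) : Prop :=
  ∀ A : Set ℕ, φ A = ⨆ n : ℕ, φ (A ∩ Iio n)

def IsNonpathological (φ : Set ℕ → ENNReal) : Prop :=
  ∀ A : Set ℕ, φ A = ⨆ (μ : Measure ℕ) (_ : ∀ B : Set ℕ, μ B ≤ φ B), μ A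

/-- `I` is a non-pathological Σ⁰₂ ideal: `I = Fin(φ)` for some non-pathological
lsc submeasure `φ` with `φ(ω) = ∞`. -/
def IsNonpathSigma2 (I : Set (Set ℕ)) : Prop :=
  ∃ φ : Set ℕ → ENNReal, IsSubmeasure φ ∧ IsLscSubmeasure φ ∧ IsNonpathological φ ∧
    φ Set.univ = ⊤ ∧ I = {A : Set ℕ | φ A < ⊤}

def IdealCountablyGenerated {X : Type} (I : Set (Set X)) : Prop :=
  ∃ B : Set (Set X), B.Countable ∧ B ⊆ I ∧
    ∀ A ∈ I, ∃ F : Set (Set X), F ⊆ B ∧ F.Finite ∧ A ⊆ ⋃₀ F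

def IdealIso {X Y : Type} (I : Set (Set X)) (J : Set (Set Y)) : Prop :=
  ∃ f : Y → X, Function.Bijective f ∧ ∀ A : Set X, (A ∈ I ↔ f ⁻¹' A ∈ J)

def RKle {X Y : Type} (I : Set (Set X)) (J : Set (Set Y)) : Prop :=
  ∃ f : Y → X, ∀ A : Set X, (A ∈ I ↔ f ⁻¹' A ∈ J)

def RBle {X Y : Type} (I : Set (Set X)) (J : Set (Set Y)) : Prop :=
  ∃ f : Y → X, (∀ x : X, (f ⁻¹' {x}).Finite) ∧ ∀ A : Set X, (A ∈ I ↔ f ⁻¹' A ∈ J)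

/-- The restriction `I↾A` of an ideal, as an ideal on the subtype `↥A`. -/
def restrictIdeal {X : Type} (I : Set (Set X)) (A : Set X) : Set (Set ↥A) :=
  {S : Set ↥A | (Subtype.val '' S) ∈ I}

def IsTall {X : Type} (I : Set (Set X)) : Prop :=
  ∀ A : Set X, A.Infinite → ∃ B ∈ I, B.Infinite ∧ B ⊆ A


open Filter Topology ENNReal

section AUX


noncomputable def psi (A : Set ℝ) (t : ℝ) : ℝ := 2 * (volume (A ∩ Iic t)).toReal

lemma voletop {S : Set ℝ} (h : S ⊆ Icc (0:ℝ) 1) : volume S ≠ ⊤ := by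
  have : volume S ≤ volume (Icc (0:ℝ) 1) := measure_mono h
  exact ne_of_lt (lt_of_le_of_lt this (by rw [Real.volume_Icc]; exact ENNReal.ofReal_lt_top))

section psi
variable {A : Set ℝ} (hA1 : A ⊆ Icc (0:ℝ) 1)

include hA1 in
lemma psi_mono : Monotone (psi A) := by
  intro t₁ t₂ h
  have hle : volume (A ∩ Iic t₁) ≤ volume (A ∩ Iic t₂) :=
    measure_mono (inter_subset_inter_right _ (Iic_subset_Iic.2 h))
  have h2 : volume (A ∩ Iic t₂) ≠ ⊤ := voletop (inter_subset_left.trans hA1)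
  have := ENNReal.toReal_mono h2 hle
  unfold psi; linarith

lemma psi_nonneg (t : ℝ) : 0 ≤ psi A t := by
  unfold psi; positivity

include hA1 in
lemma psi_diff {t₁ t₂ : ℝ} (hA : MeasurableSet A) (h : t₁ ≤ t₂) :
    volume (A ∩ Ioc t₁ t₂) = ENNReal.ofReal ((psi A t₂ - psi A t₁)/2) := by
  have hd : A ∩ Iic t₂ = (A ∩ Iic t₁) ∪ (A ∩ Ioc t₁ t₂) := by
    rw [← inter_union_distrib_left, Iic_union_Ioc_eq_Iic h]
  have hdisj : Disjoint (A ∩ Iic t₁) (A ∩ Ioc t₁ t₂) :=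
    ((Iic_disjoint_Ioc le_rfl).mono inter_subset_right inter_subset_right)
  have hmeas : MeasurableSet (A ∩ Ioc t₁ t₂) := hA.inter measurableSet_Ioc
  have hsum : volume (A ∩ Iic t₂) = volume (A ∩ Iic t₁) + volume (A ∩ Ioc t₁ t₂) := by
    rw [hd, measure_union hdisj hmeas]
  have h1 : volume (A ∩ Iic t₁) ≠ ⊤ := voletop (inter_subset_left.trans hA1)
  have h2 : volume (A ∩ Ioc t₁ t₂) ≠ ⊤ := voletop (inter_subset_left.trans hA1)
  have htr : (volume (A ∩ Iic t₂)).toReal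
      = (volume (A ∩ Iic t₁)).toReal + (volume (A ∩ Ioc t₁ t₂)).toReal := by
    rw [hsum, ENNReal.toReal_add h1 h2]
  have : (psi A t₂ - psi A t₁)/2 = (volume (A ∩ Ioc t₁ t₂)).toReal := by
    unfold psi; rw [htr]; ring
  rw [this, ENNReal.ofReal_toReal h2]

include hA1 in
lemma psi_le (hA : MeasurableSet A) (t : ℝ) : psi A t ≤ psi A 1 := by
  unfold psi
  have hsub : A ∩ Iic t ⊆ A ∩ Iic 1 := fun x hx => ⟨hx.1, (hA1 hx.1).2⟩
  have := ENNReal.toReal_mono (voletop (inter_subset_left.trans hA1)) (measure_mono hsub)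
  linarith

include hA1 in
lemma psi_zero : psi A 0 = 0 := by
  have : A ∩ Iic 0 ⊆ {0} := fun x hx => le_antisymm hx.2 (hA1 hx.1).1
  have h0 : volume (A ∩ Iic 0) = 0 := le_antisymm ((measure_mono this).trans (by simp)) zero_le
  unfold psi; rw [h0]; simp

include hA1 in
lemma psi_lip (hA : MeasurableSet A) : LipschitzWith 2 (psi A) := by
  apply LipschitzWith.of_dist_le_mul
  intro x y
  wlog h : y ≤ x generalizing x y
  · rw [dist_comm, dist_comm x y]; exact this _ _ (le_of_not_ge h)
  have hmono := psi_mono (A := A) hA1 h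
  have hd := psi_diff hA1 hA h (t₁ := y) (t₂ := x)
  have hle : volume (A ∩ Ioc y x) ≤ ENNReal.ofReal (x - y) := by
    rw [← Real.volume_Ioc]; exact measure_mono inter_subset_right
  rw [hd] at hle
  have h2 : (psi A x - psi A y)/2 ≤ x - y := by
    by_contra hc
    push_neg at hc
    have := (ENNReal.ofReal_le_ofReal_iff (by linarith)).mp hle
    linarith
  rw [Real.dist_eq, Real.dist_eq, abs_of_nonneg (by linarith), abs_of_nonneg (by linarith)]
  push_cast
  linarith
end psi

section flat
variable {A : Set ℝ} (hA1 : A ⊆ Icc (0:ℝ) 1) (hA : MeasurableSet A)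

include hA1 hA in
lemma flat_null_right (w : ℝ) : volume (A ∩ {t | w < t ∧ psi A t = psi A w}) = 0 := by
  set S := A ∩ {t | w < t ∧ psi A t = psi A w} with hS
  rcases S.eq_empty_or_nonempty with h | h
  · rw [h]; simp
  have hbdd : BddAbove S := (bddAbove_Icc (a := (0:ℝ)) (b := 1)).mono (inter_subset_left.trans hA1)
  obtain ⟨u, -, htend, hmem⟩ := exists_seq_tendsto_sSup h hbdd
  have hcover : S ⊆ insert (sSup S) (⋃ k, A ∩ Ioc w (u k)) := by
    intro t ht
    rcases eq_or_ne t (sSup S) with rfl | hne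
    · exact mem_insert _ _
    · have htlt : t < sSup S := lt_of_le_of_ne (le_csSup hbdd ht) hne
      obtain ⟨k, hk⟩ := (htend.eventually (eventually_gt_nhds htlt)).exists
      exact mem_insert_of_mem _ (mem_iUnion.2 ⟨k, ht.1, ht.2.1, hk.le⟩)
  have hzero : ∀ k, volume (A ∩ Ioc w (u k)) = 0 := by
    intro k
    rw [psi_diff hA1 hA (hmem k).2.1.le, (hmem k).2.2]
    simp
  refine le_antisymm ?_ zero_le
  calc volume S ≤ volume (insert (sSup S) (⋃ k, A ∩ Ioc w (u k))) := measure_mono hcover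
    _ ≤ volume ({sSup S} : Set ℝ) + volume (⋃ k, A ∩ Ioc w (u k)) := by
        rw [insert_eq]; exact measure_union_le _ _
    _ = 0 := by rw [Real.volume_singleton, measure_iUnion_null hzero]; simp

include hA1 hA in
lemma flat_null_left (w : ℝ) : volume (A ∩ {t | t < w ∧ psi A t = psi A w}) = 0 := by
  set S := A ∩ {t | t < w ∧ psi A t = psi A w} with hS
  rcases S.eq_empty_or_nonempty with h | h
  · rw [h]; simp
  have hbdd : BddBelow S := (bddBelow_Icc : BddBelow (Icc (0:ℝ) 1)).mono (inter_subset_left.trans hA1)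
  obtain ⟨u, -, htend, hmem⟩ := exists_seq_tendsto_sInf h hbdd
  have hcover : S ⊆ insert (sInf S) (⋃ k, A ∩ Ioc (u k) w) := by
    intro t ht
    rcases eq_or_ne t (sInf S) with rfl | hne
    · exact mem_insert _ _
    · have htlt : sInf S < t := lt_of_le_of_ne (csInf_le hbdd ht) (Ne.symm hne)
      obtain ⟨k, hk⟩ := (htend.eventually (eventually_lt_nhds htlt)).exists
      exact mem_insert_of_mem _ (mem_iUnion.2 ⟨k, ht.1, hk, ht.2.1.le⟩)
  have hzero : ∀ k, volume (A ∩ Ioc (u k) w) = 0 := by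
    intro k
    rw [psi_diff hA1 hA (hmem k).2.1.le, (hmem k).2.2]
    simp
  refine le_antisymm ?_ zero_le
  calc volume S ≤ volume (insert (sInf S) (⋃ k, A ∩ Ioc (u k) w)) := measure_mono hcover
    _ ≤ volume ({sInf S} : Set ℝ) + volume (⋃ k, A ∩ Ioc (u k) w) := by
        rw [insert_eq]; exact measure_union_le _ _
    _ = 0 := by rw [Real.volume_singleton, measure_iUnion_null hzero]; simp
end flat

section key
variable {A : Set ℝ} (hA1 : A ⊆ Icc (0:ℝ) 1) (hA : MeasurableSet A)

include hA1 hA in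
lemma psi_key (a b : ℝ) :
    volume (A ∩ psi A ⁻¹' (Ioo a b)) = 2⁻¹ * volume (Ioo a b ∩ Ioc 0 (psi A 1)) := by
  have hc2 : 0 ≤ psi A 1 := psi_nonneg 1
  by_cases hab : a < b
  swap
  · rw [Ioo_eq_empty hab]; simp
  by_cases hb : 0 < b
  swap
  · push_neg at hb
    have h1 : A ∩ psi A ⁻¹' (Ioo a b) = ∅ := by
      ext t; simp only [mem_inter_iff, mem_preimage, mem_Ioo, mem_empty_iff_false, iff_false]
      rintro ⟨-, -, h⟩; exact absurd (lt_of_lt_of_le h hb) (not_lt.2 (psi_nonneg t))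
    have h2 : Ioo a b ∩ Ioc 0 (psi A 1) = ∅ := by
      ext x; simp only [mem_inter_iff, mem_Ioo, mem_Ioc, mem_empty_iff_false, iff_false]
      rintro ⟨⟨-, h⟩, h0, -⟩; exact absurd (lt_of_lt_of_le h hb) (not_lt.2 h0.le)
    rw [h1, h2]; simp
  by_cases ha : a < psi A 1
  swap
  · push_neg at ha
    have h1 : A ∩ psi A ⁻¹' (Ioo a b) = ∅ := by
      ext t; simp only [mem_inter_iff, mem_preimage, mem_Ioo, mem_empty_iff_false, iff_false]
      rintro ⟨-, h, -⟩; exact absurd (lt_of_le_of_lt ha h) (not_lt.2 (psi_le hA1 hA t))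
    have h2 : Ioo a b ∩ Ioc 0 (psi A 1) = ∅ := by
      ext x; simp only [mem_inter_iff, mem_Ioo, mem_Ioc, mem_empty_iff_false, iff_false]
      rintro ⟨⟨h, -⟩, -, h'⟩; linarith
    rw [h1, h2]; simp
  -- main case
  set a' := max a 0 with ha'
  set b' := min b (psi A 1) with hb'
  have ha'0 : 0 ≤ a' := le_max_right _ _
  have ha'b' : a' ≤ b' := max_le (le_min hab.le ha.le) (le_min hb.le hc2)
  have haa' : a ≤ a' := le_max_left _ _
  have hb'b : b' ≤ b := min_le_left _ _
  have hb'c : b' ≤ psi A 1 := min_le_right _ _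
  have hRHS : volume (Ioo a b ∩ Ioc 0 (psi A 1)) = ENNReal.ofReal (b' - a') := by
    apply le_antisymm
    · have hsub : Ioo a b ∩ Ioc 0 (psi A 1) ⊆ Icc a' b' := by
        rintro x ⟨⟨h1, h2⟩, h3, h4⟩
        exact ⟨max_le h1.le h3.le, le_min h2.le h4⟩
      rw [← Real.volume_Icc]
      exact measure_mono hsub
    · rw [← Real.volume_Ioo]
      apply measure_mono
      rintro x ⟨h1, h2⟩
      exact ⟨⟨lt_of_le_of_lt haa' h1, lt_of_lt_of_le h2 hb'b⟩,
        lt_of_le_of_lt ha'0 h1, h2.le.trans hb'c⟩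
  have cont : Continuous (psi A) := (psi_lip hA1 hA).continuous
  -- LHS ≤
  have hle : volume (A ∩ psi A ⁻¹' (Ioo a b)) ≤ ENNReal.ofReal ((b' - a')/2) := by
    set S := A ∩ psi A ⁻¹' (Ioo a b) with hSdef
    rcases S.eq_empty_or_nonempty with h | h
    · rw [h]; simp
    have hbddA : BddAbove S := (bddAbove_Icc (a := (0:ℝ)) (b := 1)).mono (inter_subset_left.trans hA1)
    have hbddB : BddBelow S := (bddBelow_Icc : BddBelow (Icc (0:ℝ) 1)).mono (inter_subset_left.trans hA1)
    set u₀ := sInf S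
    set v₀ := sSup S
    have huv : u₀ ≤ v₀ := csInf_le_csSup h hbddB hbddA
    have hcov : S ⊆ insert u₀ (A ∩ Ioc u₀ v₀) := by
      intro t ht
      rcases eq_or_ne t u₀ with rfl | hne
      · exact mem_insert _ _
      · exact mem_insert_of_mem _ ⟨ht.1,
          lt_of_le_of_ne (csInf_le hbddB ht) (Ne.symm hne), le_csSup hbddA ht⟩
    have hψv : psi A v₀ ≤ b' := by
      obtain ⟨u, -, htend, hmem⟩ := exists_seq_tendsto_sSup h hbddA
      have : Tendsto (fun k => psi A (u k)) atTop (𝓝 (psi A v₀)) :=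
        (cont.tendsto v₀).comp htend
      refine le_min (le_of_tendsto this (Eventually.of_forall fun k => ((hmem k).2.2).le)) (psi_le hA1 hA v₀)
    have hψu : a' ≤ psi A u₀ := by
      obtain ⟨u, -, htend, hmem⟩ := exists_seq_tendsto_sInf h hbddB
      have : Tendsto (fun k => psi A (u k)) atTop (𝓝 (psi A u₀)) :=
        (cont.tendsto u₀).comp htend
      refine max_le (ge_of_tendsto this (Eventually.of_forall fun k => ((hmem k).2.1).le)) (psi_nonneg u₀)
    calc volume S ≤ volume (insert u₀ (A ∩ Ioc u₀ v₀)) := measure_mono hcov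
      _ ≤ volume ({u₀} : Set ℝ) + volume (A ∩ Ioc u₀ v₀) := by
          rw [insert_eq]; exact measure_union_le _ _
      _ = ENNReal.ofReal ((psi A v₀ - psi A u₀)/2) := by
          rw [Real.volume_singleton, psi_diff hA1 hA huv, zero_add]
      _ ≤ ENNReal.ofReal ((b' - a')/2) := ENNReal.ofReal_le_ofReal (by linarith)
  -- LHS ≥
  have hge : ENNReal.ofReal ((b' - a')/2) ≤ volume (A ∩ psi A ⁻¹' (Ioo a b)) := by
    have hIVT1 := intermediate_value_Icc (zero_le_one) cont.continuousOn (a := (0:ℝ)) (b := 1)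
    rw [psi_zero hA1] at hIVT1
    obtain ⟨v, hv01, hψv⟩ := hIVT1 ⟨le_min hb.le hc2, hb'c⟩
    have hIVT2 := intermediate_value_Icc hv01.1 cont.continuousOn
    rw [psi_zero hA1, hψv] at hIVT2
    obtain ⟨u, hu0v, hψu⟩ := hIVT2 ⟨ha'0, ha'b'⟩
    have huv : u ≤ v := hu0v.2
    have hcov : A ∩ Ioc u v ⊆ (A ∩ psi A ⁻¹' (Ioo a b)) ∪
        ((A ∩ {t | u < t ∧ psi A t = psi A u}) ∪
        ((A ∩ {t | t < v ∧ psi A t = psi A v}) ∪ ({v} : Set ℝ))) := by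
      rintro t ⟨htA, htu, htv⟩
      have h1 : psi A u ≤ psi A t := psi_mono hA1 htu.le
      have h2 : psi A t ≤ psi A v := psi_mono hA1 htv
      by_cases hlo : psi A t ≤ a
      · refine Or.inr (Or.inl ⟨htA, htu, ?_⟩)
        have : a ≤ psi A u := by rw [hψu]; exact haa'
        linarith
      by_cases hhi : b ≤ psi A t
      · rcases eq_or_ne t v with rfl | hne
        · exact Or.inr (Or.inr (Or.inr rfl))
        · refine Or.inr (Or.inr (Or.inl ⟨htA, lt_of_le_of_ne htv hne, ?_⟩))
          have : psi A v ≤ b := by rw [hψv]; exact hb'b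
          linarith
      · push_neg at hlo hhi
        exact Or.inl ⟨htA, hlo, hhi⟩
    have hnull : volume ((A ∩ {t | u < t ∧ psi A t = psi A u}) ∪
        ((A ∩ {t | t < v ∧ psi A t = psi A v}) ∪ ({v} : Set ℝ))) = 0 :=
      measure_union_null (flat_null_right hA1 hA u)
        (measure_union_null (flat_null_left hA1 hA v) Real.volume_singleton)
    calc ENNReal.ofReal ((b' - a')/2) = volume (A ∩ Ioc u v) := by
          rw [psi_diff hA1 hA huv, hψv, hψu]
      _ ≤ volume ((A ∩ psi A ⁻¹' (Ioo a b)) ∪ _) := measure_mono hcov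
      _ ≤ volume (A ∩ psi A ⁻¹' (Ioo a b)) + volume _ := measure_union_le _ _
      _ = volume (A ∩ psi A ⁻¹' (Ioo a b)) := by rw [hnull, add_zero]
  rw [hRHS, le_antisymm hle hge, ENNReal.ofReal_div_of_pos two_pos, ENNReal.ofReal_ofNat,
    ENNReal.div_eq_inv_mul]
end key

section push
variable {A : Set ℝ} (hA1 : A ⊆ Icc (0:ℝ) 1) (hA : MeasurableSet A)

include hA1 hA in
lemma psi_map : Measure.map (psi A) (volume.restrict A)
    = (2⁻¹ : ℝ≥0∞) • volume.restrict (Ioc 0 (psi A 1)) := by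
  have hψm : Measurable (psi A) := (psi_mono hA1).measurable
  haveI : IsFiniteMeasure (volume.restrict A) := by
    constructor
    rw [Measure.restrict_apply_univ]
    exact (voletop hA1).lt_top
  haveI : IsFiniteMeasure (Measure.map (psi A) (volume.restrict A)) :=
    Measure.isFiniteMeasure_map _ _
  refine Real.measure_ext_Ioo_rat fun p q => ?_
  rw [Measure.map_apply hψm measurableSet_Ioo,
    Measure.restrict_apply (hψm measurableSet_Ioo), Measure.smul_apply,
    Measure.restrict_apply measurableSet_Ioo, inter_comm, psi_key hA1 hA, smul_eq_mul]

include hA1 hA in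
lemma psi_est {B : Set ℝ} (hB : MeasurableSet B) :
    volume (A ∩ psi A ⁻¹' B) ≤ 2⁻¹ * volume B := by
  have hψm : Measurable (psi A) := (psi_mono hA1).measurable
  have : volume (A ∩ psi A ⁻¹' B) = Measure.map (psi A) (volume.restrict A) B := by
    rw [Measure.map_apply hψm hB, Measure.restrict_apply (hψm hB), inter_comm]
  rw [this, psi_map hA1 hA, Measure.smul_apply, smul_eq_mul]
  rw [Measure.restrict_apply hB]
  exact mul_le_mul_right (measure_mono inter_subset_left) _
end push

def QmStmt (I : Set (Set ℕ)) (β : ℝ≥0∞) : Prop :=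
  ∀ X : ℕ → Set ℝ, (∀ n, X n ⊆ Icc (0:ℝ) 1) → (∀ n, MeasurableSet (X n)) →
    IConvPtwise I (fun n => (X n).indicator fun _ => (1:ℝ)) (fun _ => (0:ℝ)) →
    ∃ M : Set ℝ, M ⊆ Icc (0:ℝ) 1 ∧ NullMeasurableSet M volume ∧ volume M ≤ β ∧
      {n : ℕ | ¬ X n ⊆ M} ∈ I

lemma iconv_indicator_iff {I : Set (Set ℕ)} (hI : IsIdeal I) (X : ℕ → Set ℝ) :
    IConvPtwise I (fun n => (X n).indicator fun _ => (1:ℝ)) (fun _ => (0:ℝ)) ↔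
    ∀ t ∈ Icc (0:ℝ) 1, {a : ℕ | t ∈ X a} ∈ I := by
  constructor
  · intro h t ht
    refine hI.2.1 _ _ ?_ (h t ht 1 one_pos)
    intro a ha
    simp only [mem_setOf_eq] at ha ⊢
    rw [indicator_of_mem ha]
    norm_num
  · intro h t ht ε hε
    refine hI.2.1 _ _ ?_ (h t ht)
    intro a ha
    simp only [mem_setOf_eq] at ha ⊢
    by_contra hc
    rw [indicator_of_notMem hc] at ha
    simp at ha
    linarith

lemma stepQm {I : Set (Set ℕ)} (hI : IsIdeal I)
    (hstar : ∀ X : ℕ → Set ℝ, (∀ n : ℕ, X n ⊆ Icc (0:ℝ) 1) →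
        (∀ n : ℕ, NullMeasurableSet (X n) volume) →
        IConvPtwise I (fun n => (X n).indicator (fun _ => (1:ℝ))) (fun _ => (0:ℝ)) →
        ∃ M : Set ℝ, M ⊆ Icc (0:ℝ) 1 ∧ NullMeasurableSet M volume ∧
          volume M ≤ 1/2 ∧ {n : ℕ | ¬ X n ⊆ M} ∈ I)
    {β : ℝ≥0∞} (hQ : QmStmt I β) : QmStmt I (2⁻¹ * β) := by
  intro X hXsub hXm hXconv
  obtain ⟨M₁, hM₁sub, -, hM₁vol, hG₁⟩ := hstar X hXsub (fun n => (hXm n).nullMeasurableSet) hXconv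
  set A := toMeasurable volume M₁ ∩ Icc (0:ℝ) 1 with hAdef
  have hA : MeasurableSet A := (measurableSet_toMeasurable _ _).inter measurableSet_Icc
  have hA1 : A ⊆ Icc (0:ℝ) 1 := inter_subset_right
  have hM₁A : M₁ ⊆ A := subset_inter (subset_toMeasurable _ _) hM₁sub
  have hAvol : volume A ≤ 1/2 := by
    calc volume A ≤ volume (toMeasurable volume M₁) := measure_mono inter_subset_left
      _ = volume M₁ := measure_toMeasurable _
      _ ≤ 1/2 := hM₁vol
  have hψ1 : psi A 1 ≤ 1 := by
    have h1 : volume (A ∩ Iic 1) ≤ 1/2 := le_trans (measure_mono inter_subset_left) hAvol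
    have h2 : (volume (A ∩ Iic 1)).toReal ≤ ((1:ℝ≥0∞)/2).toReal :=
      ENNReal.toReal_mono (by norm_num) h1
    have h3 : ((1:ℝ≥0∞)/2).toReal = 1/2 := by norm_num
    unfold psi
    rw [h3] at h2
    linarith
  have hψmem : ∀ t : ℝ, psi A t ∈ Icc (0:ℝ) 1 :=
    fun t => ⟨psi_nonneg t, (psi_le hA1 hA t).trans hψ1⟩
  set θ := fun s : ℝ => sInf ({u : ℝ | u ∈ Icc (0:ℝ) 1 ∧ s ≤ psi A u} ∪ {1}) with hθdef
  have hbdd : ∀ s : ℝ, BddBelow ({u : ℝ | u ∈ Icc (0:ℝ) 1 ∧ s ≤ psi A u} ∪ {1}) := by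
    intro s
    refine ⟨0, ?_⟩
    rintro u (⟨⟨h, -⟩, -⟩ | h)
    · exact h
    · simp only [mem_singleton_iff] at h; rw [h]; norm_num
  have hne : ∀ s : ℝ, ({u : ℝ | u ∈ Icc (0:ℝ) 1 ∧ s ≤ psi A u} ∪ {1}).Nonempty :=
    fun s => ⟨1, Or.inr rfl⟩
  have hθmono : Monotone θ := by
    intro s₁ s₂ h
    refine csInf_le_csInf (hbdd s₁) (hne s₂) ?_
    rintro u (⟨hu, hu2⟩ | hu)
    · exact Or.inl ⟨hu, h.trans hu2⟩
    · exact Or.inr hu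
  have hθmem : ∀ s : ℝ, θ s ∈ Icc (0:ℝ) 1 := by
    intro s
    constructor
    · refine le_csInf (hne s) ?_
      rintro u (⟨⟨h, -⟩, -⟩ | h)
      · exact h
      · simp only [mem_singleton_iff] at h; rw [h]; norm_num
    · exact csInf_le (hbdd s) (Or.inr rfl)
  -- the transferred sets
  set Y := fun n : ℕ => θ ⁻¹' (X n) ∩ Icc (0:ℝ) 1 with hYdef
  have hYconv : IConvPtwise I (fun n => (Y n).indicator fun _ => (1:ℝ)) (fun _ => (0:ℝ)) := by
    rw [iconv_indicator_iff hI]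
    intro t ht
    refine hI.2.1 _ _ ?_ ((iconv_indicator_iff hI X).1 hXconv (θ t) (hθmem t))
    intro a ha
    exact ha.1
  obtain ⟨M₂, hM₂sub, -, hM₂vol, hG₂⟩ := hQ Y
    (fun n => inter_subset_right)
    (fun n => ((hθmono.measurable (hXm n)).inter measurableSet_Icc))
    hYconv
  set B := toMeasurable volume M₂ with hBdef
  have hBm : MeasurableSet B := measurableSet_toMeasurable _ _
  have hM₂B : M₂ ⊆ B := subset_toMeasurable _ _
  have hBvol : volume B ≤ β := by rw [measure_toMeasurable]; exact hM₂vol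
  -- exceptional null set
  set E := {t : ℝ | t ∈ A ∧ θ (psi A t) ≠ t} with hEdef
  have hθle : ∀ t ∈ A, θ (psi A t) ≤ t :=
    fun t ht => csInf_le (hbdd _) (Or.inl ⟨hA1 ht, le_rfl⟩)
  have hE : volume E = 0 := by
    have hcov : E ⊆ ⋃ q : ℚ, (A ∩ {t : ℝ | (q:ℝ) < t ∧ psi A t = psi A (q:ℝ)}) := by
      rintro t ⟨htA, htne⟩
      have hlt : θ (psi A t) < t := lt_of_le_of_ne (hθle t htA) htne
      rw [hθdef] at hlt
      obtain ⟨u, hu, hult⟩ := (csInf_lt_iff (hbdd _) (hne _)).1 hlt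
      rcases hu with ⟨hu1, hu2⟩ | hu1
      · obtain ⟨q, hq1, hq2⟩ := exists_rat_btwn hult
        have hψu : psi A u = psi A t := le_antisymm (psi_mono hA1 hult.le) hu2
        have hψq : psi A t = psi A (q:ℝ) := by
          have l1 : psi A u ≤ psi A q := psi_mono hA1 hq1.le
          have l2 : psi A (q:ℝ) ≤ psi A t := psi_mono hA1 hq2.le
          linarith
        exact mem_iUnion.2 ⟨q, htA, hq2, hψq⟩
      · simp only [mem_singleton_iff] at hu1
        rw [hu1] at hult
        exact absurd ((hA1 htA).2) (not_le.2 hult)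
    refine le_antisymm ((measure_mono hcov).trans ?_) zero_le
    rw [measure_iUnion_null (fun q : ℚ => flat_null_right hA1 hA (q:ℝ))]
  set M := (A ∩ psi A ⁻¹' B) ∪ E with hMdef
  refine ⟨M, ?_, ?_, ?_, ?_⟩
  · rintro t (⟨h, -⟩ | ⟨h, -⟩) <;> exact hA1 h
  · exact ((hA.inter ((psi_mono hA1).measurable hBm)).nullMeasurableSet).union
      (NullMeasurableSet.of_null hE)
  · calc volume M ≤ volume (A ∩ psi A ⁻¹' B) + volume E := measure_union_le _ _
      _ = volume (A ∩ psi A ⁻¹' B) := by rw [hE, add_zero]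
      _ ≤ 2⁻¹ * volume B := psi_est hA1 hA hBm
      _ ≤ 2⁻¹ * β := mul_le_mul_right hBvol _
  · refine hI.2.1 _ _ ?_ (hI.1 _ _ hG₁ hG₂)
    intro n hn
    simp only [mem_setOf_eq, mem_union] at hn ⊢
    by_contra hc
    push_neg at hc
    obtain ⟨hc1, hc2⟩ := hc
    refine hn (fun t ht => ?_)
    have htA : t ∈ A := hM₁A (hc1 ht)
    rcases eq_or_ne (θ (psi A t)) t with heq | hne2
    · refine Or.inl ⟨htA, ?_⟩
      have : psi A t ∈ Y n := ⟨by rw [mem_preimage, heq]; exact ht, hψmem t⟩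
      exact hM₂B (hc2 this)
    · exact Or.inr ⟨htA, hne2⟩

lemma pow_Qm {I : Set (Set ℕ)} (hI : IsIdeal I)
    (hstar : ∀ X : ℕ → Set ℝ, (∀ n : ℕ, X n ⊆ Icc (0:ℝ) 1) →
        (∀ n : ℕ, NullMeasurableSet (X n) volume) →
        IConvPtwise I (fun n => (X n).indicator (fun _ => (1:ℝ))) (fun _ => (0:ℝ)) →
        ∃ M : Set ℝ, M ⊆ Icc (0:ℝ) 1 ∧ NullMeasurableSet M volume ∧
          volume M ≤ 1/2 ∧ {n : ℕ | ¬ X n ⊆ M} ∈ I) :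
    ∀ k : ℕ, QmStmt I ((2⁻¹ : ℝ≥0∞) ^ (k+1)) := by
  intro k
  induction k with
  | zero =>
    intro X h1 h2 h3
    obtain ⟨M, a, b, c, d⟩ := hstar X h1 (fun n => (h2 n).nullMeasurableSet) h3
    exact ⟨M, a, b, by rw [pow_one, ← one_div]; exact c, d⟩
  | succ k ih =>
    have h := stepQm hI hstar ih
    have he : (2⁻¹ : ℝ≥0∞) * 2⁻¹ ^ (k+1) = 2⁻¹ ^ (k+1+1) := by
      rw [pow_succ, pow_succ]; ring
    rw [he] at h
    exact h

lemma Qnull {I : Set (Set ℕ)} (hI : IsIdeal I) {β : ℝ≥0∞} (hQ : QmStmt I β) :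
    ∀ X : ℕ → Set ℝ, (∀ n, X n ⊆ Icc (0:ℝ) 1) → (∀ n, NullMeasurableSet (X n) volume) →
    IConvPtwise I (fun n => (X n).indicator fun _ => (1:ℝ)) (fun _ => (0:ℝ)) →
    ∃ M : Set ℝ, M ⊆ Icc (0:ℝ) 1 ∧ NullMeasurableSet M volume ∧ volume M ≤ β ∧
      {n : ℕ | ¬ X n ⊆ M} ∈ I := by
  intro X hXsub hXnm hXconv
  choose K hKsub hKm hKae using fun n => (hXnm n).exists_measurable_subset_ae_eq
  have hnull : ∀ n, volume (X n \ K n) = 0 := fun n => (ae_eq_set.1 (hKae n)).2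
  set N := toMeasurable volume (⋃ n, X n \ K n) ∩ Icc (0:ℝ) 1 with hN
  have hNnull : volume N = 0 := by
    refine le_antisymm ?_ zero_le
    calc volume N ≤ volume (toMeasurable volume (⋃ n, X n \ K n)) :=
          measure_mono inter_subset_left
      _ = 0 := by rw [measure_toMeasurable]; exact measure_iUnion_null hnull
  have hXK : ∀ n, X n ⊆ K n ∪ N := by
    intro n t ht
    by_cases h : t ∈ K n
    · exact Or.inl h
    · exact Or.inr ⟨subset_toMeasurable _ _ (mem_iUnion.2 ⟨n, ht, h⟩), hXsub n ht⟩
  have hKconv : IConvPtwise I (fun n => (K n).indicator fun _ => (1:ℝ)) (fun _ => (0:ℝ)) := by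
    rw [iconv_indicator_iff hI]
    intro t ht
    exact hI.2.1 _ _ (fun a ha => hKsub a ha) ((iconv_indicator_iff hI X).1 hXconv t ht)
  obtain ⟨M', h1, h2, h3, h4⟩ := hQ K (fun n => (hKsub n).trans (hXsub n)) hKm hKconv
  refine ⟨M' ∪ N, ?_, ?_, ?_, ?_⟩
  · rintro t (h | h)
    exacts [h1 h, h.2]
  · exact h2.union (NullMeasurableSet.of_null hNnull)
  · calc volume (M' ∪ N) ≤ volume M' + volume N := measure_union_le _ _
      _ ≤ β := by rw [hNnull, add_zero]; exact h3
  · refine hI.2.1 _ _ ?_ h4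
    intro n hn
    simp only [mem_setOf_eq] at hn ⊢
    exact fun hc => hn (fun t ht => (hXK n ht).elim (fun h => Or.inl (hc h)) Or.inr)

lemma restrict_nms {S T : Set ℝ} (hT : MeasurableSet T)
    (h : NullMeasurableSet S (volume.restrict T)) : NullMeasurableSet (S ∩ T) volume := by
  obtain ⟨S', hS'sub, hS'm, hae⟩ := h.exists_measurable_subset_ae_eq
  have hd : volume ((S \ S') ∩ T) = 0 := by
    have := (ae_eq_set.1 hae).2
    rwa [Measure.restrict_apply' hT] at this
  refine NullMeasurableSet.congr ((hS'm.inter hT).nullMeasurableSet) ?_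
  rw [Filter.eventuallyEq_set]
  have : {x : ℝ | x ∈ S' ∩ T ↔ x ∈ S ∩ T}ᶜ ⊆ (S \ S') ∩ T := by
    intro x hx
    simp only [mem_compl_iff, mem_setOf_eq, mem_inter_iff, mem_diff] at hx ⊢
    by_cases hxT : x ∈ T
    · by_cases hxS' : x ∈ S'
      · exact absurd (iff_of_true ⟨hxS', hxT⟩ ⟨hS'sub hxS', hxT⟩) hx
      · by_cases hxS : x ∈ S
        · exact ⟨⟨hxS, hxS'⟩, hxT⟩
        · exact absurd (iff_of_false (fun h => hxS' h.1) (fun h => hxS h.1)) hx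
    · exact absurd (iff_of_false (fun h => hxT h.2) (fun h => hxT h.2)) hx
  exact measure_mono_null this hd

end AUX

/-- An ideal `I` on `ω` is Egorov iff for every sequence `(X_n)` of Lebesgue-measurable
subsets of `[0,1]` whose characteristic functions `I`-converge pointwise to `0`, there
is a Lebesgue-measurable `M ⊆ [0,1]` with `λ(M) ≤ 1/2` and `{n : X_n ⊄ M} ∈ I`. -/
theorem egorov_iff_onehalf (I : Set (Set ℕ)) (hI : IsIdeal I) :
    IsEgorov I ↔
      ∀ X : ℕ → Set ℝ, (∀ n : ℕ, X n ⊆ Icc (0:ℝ) 1) →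
        (∀ n : ℕ, NullMeasurableSet (X n) volume) →
        IConvPtwise I (fun n => (X n).indicator (fun _ => (1:ℝ))) (fun _ => (0:ℝ)) →
        ∃ M : Set ℝ, M ⊆ Icc (0:ℝ) 1 ∧ NullMeasurableSet M volume ∧
          volume M ≤ 1/2 ∧ {n : ℕ | ¬ X n ⊆ M} ∈ I := by
  constructor
  · -- Egorov ⇒ condition
    intro hE X hXsub hXnull hconv
    have hf : ∀ a : ℕ, AEMeasurable ((X a).indicator fun _ => (1:ℝ))
        (volume.restrict (Icc (0:ℝ) 1)) := by
      intro a
      have h : NullMeasurableSet (X a) (volume.restrict (Icc (0:ℝ) 1)) :=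
        (hXnull a).mono_ac Measure.restrict_le_self.absolutelyContinuous
      obtain ⟨t, htsub, htm, hae⟩ := h.exists_measurable_subset_ae_eq
      refine ⟨t.indicator fun _ => (1:ℝ), measurable_const.indicator htm, ?_⟩
      have hsub : {x : ℝ | (X a).indicator (fun _ => (1:ℝ)) x ≠ t.indicator (fun _ => (1:ℝ)) x}
          ⊆ X a \ t := by
        intro x hx
        simp only [mem_setOf_eq] at hx
        by_cases h1 : x ∈ X a
        · refine ⟨h1, fun h2 => hx ?_⟩
          rw [indicator_of_mem h1, indicator_of_mem h2]
        · exact absurd (by rw [indicator_of_notMem h1,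
            indicator_of_notMem (fun h2 => h1 (htsub h2))]) hx
      exact measure_mono_null hsub (ae_eq_set.1 hae).2
    obtain ⟨M', hsub', hnull', hvol', hunif'⟩ := hE _ _ hf aemeasurable_const hconv
      (1/2) one_half_pos
    have hhalf : ENNReal.ofReal ((1:ℝ)/2) = 1/2 := by
      rw [ENNReal.ofReal_div_of_pos two_pos, ENNReal.ofReal_one, ENNReal.ofReal_ofNat]
    refine ⟨Icc (0:ℝ) 1 \ M', diff_subset,
      (measurableSet_Icc.nullMeasurableSet).diff hnull', ?_, ?_⟩
    · rw [← hhalf]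
      exact hvol'.le
    · refine hI.2.1 _ _ ?_ (hunif' 1 one_pos)
      intro n hn
      simp only [mem_setOf_eq] at hn ⊢
      obtain ⟨t, htX, htM⟩ := not_subset.1 hn
      have htI : t ∈ Icc (0:ℝ) 1 := hXsub n htX
      have htM' : t ∈ M' := by
        by_contra h
        exact htM ⟨htI, h⟩
      refine ⟨t, htM', ?_⟩
      rw [indicator_of_mem htX]
      norm_num
  · -- condition ⇒ Egorov
    intro hstar f g hf hg hconv η hη
    have hQ := pow_Qm hI hstar
    obtain ⟨m, hm⟩ := exists_pow_lt_of_lt_one hη (by norm_num : (1:ℝ)/2 < 1)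
    set Xk : ℕ → ℕ → Set ℝ :=
      fun k n => (fun t => |f n t - g t|) ⁻¹' Ici (1/(k+1 : ℝ)) ∩ Icc (0:ℝ) 1 with hXk
    have hXknull : ∀ k n, NullMeasurableSet (Xk k n) volume := by
      intro k n
      refine restrict_nms measurableSet_Icc ?_
      exact ((continuous_abs.measurable.comp_aemeasurable ((hf n).sub hg)).nullMeasurable) measurableSet_Ici
    have hXkconv : ∀ k, IConvPtwise I (fun n => (Xk k n).indicator fun _ => (1:ℝ))
        (fun _ => (0:ℝ)) := by
      intro k
      rw [iconv_indicator_iff hI]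
      intro t ht
      refine hI.2.1 _ _ ?_ (hconv t ht (1/(k+1:ℝ)) (by positivity))
      intro a ha
      exact ha.1
    have h := fun k => Qnull hI (hQ (m + k)) (Xk k) (fun n => inter_subset_right)
      (hXknull k) (hXkconv k)
    choose Mk hMksub hMknm hMkvol hMkbad using h
    set U := ⋃ k, Mk k with hU
    have hUvol : volume U < ENNReal.ofReal η := by
      have h1 : volume U ≤ ∑' k : ℕ, ((2:ℝ≥0∞))⁻¹ ^ (m + k + 1) :=
        (measure_iUnion_le _).trans (ENNReal.tsum_le_tsum fun k => hMkvol k)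
      have h2 : ∑' k : ℕ, ((2:ℝ≥0∞))⁻¹ ^ (m + k + 1) = 2⁻¹ ^ m := by
        have : ∀ k : ℕ, ((2:ℝ≥0∞))⁻¹ ^ (m + k + 1) = 2⁻¹ ^ (m + 1) * 2⁻¹ ^ k := by
          intro k
          rw [← pow_add]
          ring_nf
        rw [tsum_congr this, ENNReal.tsum_mul_left, ENNReal.tsum_geometric]
        have h3 : (1 : ℝ≥0∞) - 2⁻¹ = 2⁻¹ := by
          rw [ENNReal.one_sub_inv_two]
        rw [h3, pow_succ]
        rw [mul_assoc, ENNReal.mul_inv_cancel (by simp) (by simp), mul_one]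
      have h4 : ((2:ℝ≥0∞))⁻¹ ^ m < ENNReal.ofReal η := by
        have : ((2:ℝ≥0∞))⁻¹ ^ m = ENNReal.ofReal ((1/2 : ℝ) ^ m) := by
          rw [ENNReal.ofReal_pow (by norm_num), ENNReal.ofReal_div_of_pos two_pos,
            ENNReal.ofReal_one, ENNReal.ofReal_ofNat, one_div]
        rw [this, ENNReal.ofReal_lt_ofReal_iff hη]
        exact hm
      calc volume U ≤ 2⁻¹ ^ m := h1.trans_eq h2
        _ < ENNReal.ofReal η := h4
    refine ⟨Icc (0:ℝ) 1 \ U, diff_subset,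
      (measurableSet_Icc.nullMeasurableSet).diff (NullMeasurableSet.iUnion fun k => hMknm k),
      ?_, ?_⟩
    · refine lt_of_le_of_lt ?_ hUvol
      apply measure_mono
      intro t ht
      simp only [mem_diff, not_and, not_not] at ht
      exact ht.2 ht.1
    · intro ε hε
      obtain ⟨k, hk⟩ := exists_nat_one_div_lt hε
      refine hI.2.1 _ _ ?_ (hMkbad k)
      intro a ha
      simp only [mem_setOf_eq] at ha ⊢
      obtain ⟨t, htM, hta⟩ := ha
      intro hc
      have htXk : t ∈ Xk k a := by
        constructor
        · simp only [mem_preimage, mem_Ici]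
          calc (1:ℝ)/(k+1) ≤ ε := by exact_mod_cast hk.le
            _ ≤ |f a t - g t| := by simpa using hta
        · exact htM.1
      exact htM.2 (mem_iUnion.2 ⟨k, hc htXk⟩)
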